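/- Let n ≥ 2 and let f : ℝ≥0 → ℝ ∪ {−∞} be a strictly increasing function such that for every positive-admitting integer-valued instance with n agents, every allocation chosen by the additive welfarist rule with f is EF1. Then f satisfies Condition 6a. -/
import Mathlib


open scoped BigOperators

noncomputable section

namespace FairDiv

/-- The bundle of goods received by agent `i` under the assignment `A` of goods to agents. -/
def bundle {n m : ℕ} (A : Fin m → Fin n) (i : Fin n) : Finset (Fin m) :=
  Finset.univ.filter fun g => A g = i

/-- Additive utility of agent `i` for a set `S` of goods. -/
def util {n m : ℕ} (u : Fin n → Fin m → ℝ) (i : Fin n) (S : Finset (Fin m)) : ℝ :=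
  ∑ g ∈ S, u i g

/-- Envy-freeness up to one good. -/
def EF1 {n m : ℕ} (u : Fin n → Fin m → ℝ) (A : Fin m → Fin n) : Prop :=
  ∀ i j : Fin n, bundle A j ≠ ∅ →
    ∃ g ∈ bundle A j, util u i ((bundle A j).erase g) ≤ util u i (bundle A i)

/-- Welfare of an allocation under the additive welfarist rule with function `f`. -/
def welfare {n m : ℕ} (f : ℝ → EReal) (u : Fin n → Fin m → ℝ) (A : Fin m → Fin n) : EReal :=
  ∑ i : Fin n, f (util u i (bundle A i))

/-- An allocation is chosen by the additive welfarist rule with `f` if it maximizes welfare. -/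
def Chosen {n m : ℕ} (f : ℝ → EReal) (u : Fin n → Fin m → ℝ) (A : Fin m → Fin n) : Prop :=
  ∀ B : Fin m → Fin n, welfare f u B ≤ welfare f u A

/-- An instance is positive-admitting if some allocation gives everyone positive utility. -/
def PositiveAdmitting {n m : ℕ} (u : Fin n → Fin m → ℝ) : Prop :=
  ∃ B : Fin m → Fin n, ∀ i : Fin n, 0 < util u i (bundle B i)

def IdenticalGood {n m : ℕ} (u : Fin n → Fin m → ℝ) : Prop :=
  ∀ i : Fin n, ∃ a : ℝ, 0 < a ∧ ∀ g : Fin m, u i g = a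

def TwoValue {n m : ℕ} (u : Fin n → Fin m → ℝ) : Prop :=
  ∃ a₁ a₂ : ℝ, a₁ ≠ a₂ ∧ 0 ≤ a₁ ∧ 0 ≤ a₂ ∧ ∀ i g, u i g = a₁ ∨ u i g = a₂

def Normalized {n m : ℕ} (u : Fin n → Fin m → ℝ) : Prop :=
  ∀ i j : Fin n, util u i Finset.univ = util u j Finset.univ

def IntegerValued {n m : ℕ} (u : Fin n → Fin m → ℝ) : Prop :=
  ∀ i g, ∃ z : ℕ, u i g = (z : ℝ)

def Binary {n m : ℕ} (u : Fin n → Fin m → ℝ) : Prop :=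
  ∀ i g, u i g = 0 ∨ u i g = 1

/-- `Δ_{f,k}(x) = f((k+1)x) − f(kx)`, valued in `EReal` (it is `+∞` iff `f(kx) = −∞`). -/
def Delta (f : ℝ → EReal) (k : ℕ) (x : ℝ) : EReal :=
  f (((k : ℝ) + 1) * x) - f ((k : ℝ) * x)

/-- Condition 1: `Δ_{f,k}(b) > Δ_{f,k+1}(a)` for all `k ∈ ℤ≥0` and `a, b ∈ ℝ>0`. -/
def Cond1 (f : ℝ → EReal) : Prop :=
  ∀ k : ℕ, ∀ a b : ℝ, 0 < a → 0 < b → Delta f (k + 1) a < Delta f k b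

/-- Condition 1a: `Δ_{f,k}` is constant on `ℝ>0` for every `k ∈ ℤ>0`. -/
def Cond1a (f : ℝ → EReal) : Prop :=
  ∀ k : ℕ, 0 < k → ∀ x y : ℝ, 0 < x → 0 < y → Delta f k x = Delta f k y

/-- Condition 2. -/
def Cond2 (f : ℝ → EReal) : Prop :=
  ∀ a b c d : ℝ, 0 ≤ a → 0 ≤ b → 0 ≤ c → 0 ≤ d →
    min a b ≤ min c d → a * b < c * d → f a + f b < f c + f d

/-- Condition 3: `Δ_{f,k}(b) > Δ_{f,k+1}(a)` for all `k ∈ ℤ≥0` and `a, b ∈ ℤ>0`. -/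
def Cond3 (f : ℝ → EReal) : Prop :=
  ∀ k : ℕ, ∀ a b : ℕ, 0 < a → 0 < b → Delta f (k + 1) (a : ℝ) < Delta f k (b : ℝ)

/-- Condition 3a. -/
def Cond3a (f : ℝ → EReal) : Prop :=
  ∀ k l : ℕ, l < k → ∀ a b : ℕ, 0 < a → 0 < b → Delta f k (a : ℝ) < Delta f l (b : ℝ)

/-- Condition 3b: `Δ_{f,k}(1) > Δ_{f,k+1}(a) > Δ_{f,k+2}(1)` for `k ∈ ℤ≥0`, `a ∈ ℤ>0`. -/
def Cond3b (f : ℝ → EReal) : Prop :=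
  ∀ k : ℕ, ∀ a : ℕ, 0 < a →
    Delta f (k + 1) (a : ℝ) < Delta f k 1 ∧ Delta f (k + 2) 1 < Delta f (k + 1) (a : ℝ)

/-- Condition 4: `Δ_{f,k}(1) > Δ_{f,k+1}(1)` for all `k ∈ ℤ≥0`. -/
def Cond4 (f : ℝ → EReal) : Prop :=
  ∀ k : ℕ, Delta f (k + 1) 1 < Delta f k 1

/-- Condition 5. -/
def Cond5 (f : ℝ → EReal) : Prop :=
  ∀ a b k l r : ℕ, 0 < a → 0 < b → b ≤ a → l * b + r * a < (k + 1) * b →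
    Delta f (k + 1) (a : ℝ) <
        f (((l : ℝ) + 1) * (b : ℝ) + (r : ℝ) * (a : ℝ)) - f ((l : ℝ) * (b : ℝ) + (r : ℝ) * (a : ℝ))
      ∧ Delta f (k + 2) 1 < Delta f (k + 1) (a : ℝ)

/-- Condition 6a: `f((k+1)b−1) − f(kb−1) > Δ_{f,k}(a)` for all `k, a, b ∈ ℤ>0`. -/
def Cond6a (f : ℝ → EReal) : Prop :=
  ∀ k a b : ℕ, 0 < k → 0 < a → 0 < b →
    Delta f k (a : ℝ) < f (((k : ℝ) + 1) * (b : ℝ) - 1) - f ((k : ℝ) * (b : ℝ) - 1)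

/-- Condition 6b: `f(y+b) − f(y) > f(x+a) − f(x)` whenever `x/a ≥ (y+1)/b`. -/
def Cond6b (f : ℝ → EReal) : Prop :=
  ∀ a b : ℕ, ∀ x y : ℕ, 0 < a → 0 < b → ((y : ℝ) + 1) / (b : ℝ) ≤ (x : ℝ) / (a : ℝ) →
    f ((x : ℝ) + (a : ℝ)) - f (x : ℝ) < f ((y : ℝ) + (b : ℝ)) - f (y : ℝ)

/-- Modified logarithmic function `λ_c(x) = log (x + c)`, with `log 0 = −∞`. -/
def lam (c : ℝ) (x : ℝ) : EReal :=
  if x + c = 0 then ⊥ else ((Real.log (x + c) : ℝ) : EReal)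

/-- The `p`-mean function `φ_p`, with `φ_p(0) = −∞` for `p ≤ 0`. -/
def phi (p : ℝ) (x : ℝ) : EReal :=
  if 0 < p then ((x ^ p : ℝ) : EReal)
  else if x = 0 then ⊥
  else if p = 0 then ((Real.log x : ℝ) : EReal)
  else ((-(x ^ p) : ℝ) : EReal)

/-- Modified harmonic number `h_c` on nonnegative integers. -/
def hmod (c : ℝ) (x : ℕ) : EReal :=
  if c = -1 then
    (if x = 0 then (⊥ : EReal)
     else (((∑ t ∈ Finset.range (x - 1), (1 : ℝ) / ((t : ℝ) + 1)) : ℝ) : EReal))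
  else (((∑ t ∈ Finset.range x, (1 : ℝ) / ((t : ℝ) + 1 + c)) : ℝ) : EReal)

/-- Condition 3b for a function defined on nonnegative integers. -/
def Cond3bNat (f : ℕ → EReal) : Prop :=
  ∀ k : ℕ, ∀ a : ℕ, 0 < a →
    f ((k + 2) * a) - f ((k + 1) * a) < f (k + 1) - f k
    ∧ f (k + 3) - f (k + 2) < f ((k + 2) * a) - f ((k + 1) * a)

-- auxiliary

def igM (n k b : ℕ) : ℕ := 2*k + (b-1) + (n-2)

def igUN (k a b : ℕ) : ℕ → ℕ → ℝ := fun i j =>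
  if j < 2*k then (if i = 0 then (a:ℝ) else if i = 1 then (b:ℝ) else 0)
  else if j < 2*k + (b-1) then (if i = 1 then 1 else 0)
  else if i = j - (2*k + (b-1)) + 2 then 1 else 0

def igU (n k a b : ℕ) : Fin n → Fin (igM n k b) → ℝ := fun i g => igUN k a b i.1 g.1

def igAN (k b : ℕ) : ℕ → ℕ := fun j =>
  if j < k+1 then 0 else if j < 2*k + (b-1) then 1 else j - (2*k + (b-1)) + 2

lemma igAN_lt (n k b : ℕ) (hn : 2 ≤ n) {j : ℕ} (hj : j < igM n k b) : igAN k b j < n := by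
  unfold igM at hj; unfold igAN; split_ifs <;> omega

def igA (n k b : ℕ) (hn : 2 ≤ n) : Fin (igM n k b) → Fin n :=
  fun g => ⟨igAN k b g.1, igAN_lt n k b hn g.2⟩

def igPN (k b : ℕ) : ℕ → ℕ := fun j =>
  if j = 0 then 0 else if j < 2*k + (b-1) then 1 else j - (2*k + (b-1)) + 2

lemma igPN_lt (n k b : ℕ) (hn : 2 ≤ n) {j : ℕ} (hj : j < igM n k b) : igPN k b j < n := by
  unfold igM at hj; unfold igPN; split_ifs <;> omega

def igP (n k b : ℕ) (hn : 2 ≤ n) : Fin (igM n k b) → Fin n :=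
  fun g => ⟨igPN k b g.1, igPN_lt n k b hn g.2⟩

lemma mem_bundle' {n m : ℕ} {B : Fin m → Fin n} {g : Fin m} {i : Fin n} :
    g ∈ bundle B i ↔ B g = i := by simp [bundle]

lemma util_nonneg' {n m : ℕ} {u : Fin n → Fin m → ℝ} (hu : ∀ i g, 0 ≤ u i g)
    (i : Fin n) (S : Finset (Fin m)) : 0 ≤ util u i S :=
  Finset.sum_nonneg fun g _ => hu i g

lemma util_erase' {n m : ℕ} (u : Fin n → Fin m → ℝ) (i : Fin n) {S : Finset (Fin m)}
    {g : Fin m} (hg : g ∈ S) : util u i (S.erase g) = util u i S - u i g := by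
  have h := Finset.sum_erase_add S (u i) hg
  unfold util
  linarith

lemma igSum (n k b : ℕ) (hk : 1 ≤ k) {M : Type*} [AddCommMonoid M] (F : ℕ → M) :
    ∑ j ∈ Finset.range (igM n k b), F j
      = (∑ j ∈ Finset.range (k+1), F j)
        + ((∑ x ∈ Finset.range (k-1), F ((k+1) + x))
        + ((∑ x ∈ Finset.range (b-1), F ((k+1) + ((k-1) + x)))
        + (∑ x ∈ Finset.range (n-2), F ((k+1) + ((k-1) + ((b-1) + x)))))) := by
  rw [show igM n k b = (k+1) + ((k-1) + ((b-1) + (n-2))) by unfold igM; omega]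
  rw [Finset.sum_range_add F (k+1) ((k-1) + ((b-1) + (n-2)))]
  congr 1
  rw [Finset.sum_range_add (fun x => F ((k+1) + x)) (k-1) ((b-1) + (n-2))]
  congr 1
  rw [Finset.sum_range_add (fun x => F ((k+1) + ((k-1) + x))) (b-1) (n-2)]

lemma igUN_nonneg (k a b : ℕ) (i j : ℕ) : 0 ≤ igUN k a b i j := by
  unfold igUN; split_ifs <;> positivity

lemma igUN0 (k a b : ℕ) (j : ℕ) : igUN k a b 0 j = if j < 2*k then (a:ℝ) else 0 := by
  unfold igUN
  by_cases h : j < 2*k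
  · rw [if_pos h, if_pos h, if_pos rfl]
  · rw [if_neg h, if_neg h, if_neg (by omega : ¬ (0:ℕ) = j - (2*k+(b-1)) + 2),
      if_neg (by norm_num : ¬ (0:ℕ) = 1)]
    exact ite_self 0

lemma igUN1 (k a b : ℕ) (j : ℕ) :
    igUN k a b 1 j = if j < 2*k then (b:ℝ) else if j < 2*k + (b-1) then 1 else 0 := by
  unfold igUN
  by_cases h : j < 2*k
  · rw [if_pos h, if_pos h, if_neg (by norm_num : ¬ (1:ℕ) = 0), if_pos rfl]
  · rw [if_neg h, if_neg h, if_neg (by omega : ¬ (1:ℕ) = j - (2*k+(b-1)) + 2), if_pos rfl]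

lemma igUN_hi (k a b : ℕ) (i j : ℕ) (hi : 2 ≤ i) :
    igUN k a b i j = if (2*k + (b-1) ≤ j ∧ i = j - (2*k+(b-1)) + 2) then (1:ℝ) else 0 := by
  unfold igUN
  by_cases h1 : j < 2*k
  · rw [if_pos h1, if_neg (by omega : ¬ i = 0), if_neg (by omega : ¬ i = 1),
      if_neg (fun hc => by have := hc.1; omega)]
  · by_cases h2 : j < 2*k + (b-1)
    · rw [if_neg h1, if_pos h2, if_neg (by omega : ¬ i = 1),
        if_neg (fun hc => by have := hc.1; omega)]
    · rw [if_neg h1, if_neg h2]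
      by_cases h3 : i = j - (2*k+(b-1)) + 2
      · rw [if_pos h3, if_pos ⟨by omega, h3⟩]
      · rw [if_neg h3, if_neg (fun hc => h3 hc.2)]

lemma igUtilA (n k a b : ℕ) (hn : 2 ≤ n) (i c : Fin n) :
    util (igU n k a b) i (bundle (igA n k b hn) c)
      = ∑ j ∈ Finset.range (igM n k b),
          (if igAN k b j = c.1 then igUN k a b i.1 j else 0) := by
  unfold util bundle
  rw [Finset.sum_filter]
  rw [← Fin.sum_univ_eq_sum_range
    (fun j => if igAN k b j = c.1 then igUN k a b i.1 j else 0) (igM n k b)]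
  refine Finset.sum_congr rfl fun g _ => ?_
  by_cases h : igAN k b g.1 = c.1
  · rw [if_pos h, if_pos (Fin.ext h : igA n k b hn g = c)]
    rfl
  · rw [if_neg h, if_neg (fun hc => h (congrArg Fin.val hc))]

lemma igSum00 (n k a b : ℕ) (hk : 1 ≤ k) :
    ∑ j ∈ Finset.range (igM n k b), (if igAN k b j = 0 then igUN k a b 0 j else 0)
      = ((k:ℝ)+1) * a := by
  rw [igSum n k b hk]
  have h1 : ∀ j ∈ Finset.range (k+1),
      (if igAN k b j = 0 then igUN k a b 0 j else 0) = (a:ℝ) := by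
    intro j hj
    have hj' := Finset.mem_range.mp hj
    have hA : igAN k b j = 0 := by unfold igAN; rw [if_pos hj']
    rw [hA, if_pos rfl, igUN0, if_pos (by omega)]
  have h2 : ∀ x ∈ Finset.range (k-1),
      (if igAN k b ((k+1)+x) = 0 then igUN k a b 0 ((k+1)+x) else 0) = (0:ℝ) := by
    intro x hx
    have hx' := Finset.mem_range.mp hx
    have hA : igAN k b ((k+1)+x) = 1 := by
      unfold igAN; rw [if_neg (by omega), if_pos (by omega)]
    rw [hA, if_neg (by omega)]
  have h3 : ∀ x ∈ Finset.range (b-1),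
      (if igAN k b ((k+1)+((k-1)+x)) = 0 then igUN k a b 0 ((k+1)+((k-1)+x)) else 0) = (0:ℝ) := by
    intro x hx
    have hx' := Finset.mem_range.mp hx
    have hA : igAN k b ((k+1)+((k-1)+x)) = 1 := by
      unfold igAN; rw [if_neg (by omega), if_pos (by omega)]
    rw [hA, if_neg (by omega)]
  have h4 : ∀ x ∈ Finset.range (n-2),
      (if igAN k b ((k+1)+((k-1)+((b-1)+x))) = 0
        then igUN k a b 0 ((k+1)+((k-1)+((b-1)+x))) else 0) = (0:ℝ) := by
    intro x hx
    have hA : igAN k b ((k+1)+((k-1)+((b-1)+x)))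
        = ((k+1)+((k-1)+((b-1)+x))) - (2*k+(b-1)) + 2 := by
      unfold igAN; rw [if_neg (by omega), if_neg (by omega)]
    rw [hA, if_neg (by omega)]
  rw [Finset.sum_congr rfl h1, Finset.sum_congr rfl h2, Finset.sum_congr rfl h3,
    Finset.sum_congr rfl h4]
  simp only [Finset.sum_const, Finset.sum_const_zero, Finset.card_range, nsmul_eq_mul,
    add_zero, zero_add]
  push_cast
  ring

lemma igSum10 (n k a b : ℕ) (hk : 1 ≤ k) :
    ∑ j ∈ Finset.range (igM n k b), (if igAN k b j = 0 then igUN k a b 1 j else 0)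
      = ((k:ℝ)+1) * b := by
  rw [igSum n k b hk]
  have h1 : ∀ j ∈ Finset.range (k+1),
      (if igAN k b j = 0 then igUN k a b 1 j else 0) = (b:ℝ) := by
    intro j hj
    have hj' := Finset.mem_range.mp hj
    have hA : igAN k b j = 0 := by unfold igAN; rw [if_pos hj']
    rw [hA, if_pos rfl, igUN1, if_pos (by omega)]
  have h2 : ∀ x ∈ Finset.range (k-1),
      (if igAN k b ((k+1)+x) = 0 then igUN k a b 1 ((k+1)+x) else 0) = (0:ℝ) := by
    intro x hx
    have hx' := Finset.mem_range.mp hx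
    have hA : igAN k b ((k+1)+x) = 1 := by
      unfold igAN; rw [if_neg (by omega), if_pos (by omega)]
    rw [hA, if_neg (by omega)]
  have h3 : ∀ x ∈ Finset.range (b-1),
      (if igAN k b ((k+1)+((k-1)+x)) = 0 then igUN k a b 1 ((k+1)+((k-1)+x)) else 0) = (0:ℝ) := by
    intro x hx
    have hx' := Finset.mem_range.mp hx
    have hA : igAN k b ((k+1)+((k-1)+x)) = 1 := by
      unfold igAN; rw [if_neg (by omega), if_pos (by omega)]
    rw [hA, if_neg (by omega)]
  have h4 : ∀ x ∈ Finset.range (n-2),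
      (if igAN k b ((k+1)+((k-1)+((b-1)+x))) = 0
        then igUN k a b 1 ((k+1)+((k-1)+((b-1)+x))) else 0) = (0:ℝ) := by
    intro x hx
    have hA : igAN k b ((k+1)+((k-1)+((b-1)+x)))
        = ((k+1)+((k-1)+((b-1)+x))) - (2*k+(b-1)) + 2 := by
      unfold igAN; rw [if_neg (by omega), if_neg (by omega)]
    rw [hA, if_neg (by omega)]
  rw [Finset.sum_congr rfl h1, Finset.sum_congr rfl h2, Finset.sum_congr rfl h3,
    Finset.sum_congr rfl h4]
  simp only [Finset.sum_const, Finset.sum_const_zero, Finset.card_range, nsmul_eq_mul,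
    add_zero, zero_add]
  push_cast
  ring

lemma igSum11 (n k a b : ℕ) (hk : 1 ≤ k) (hb : 1 ≤ b) :
    ∑ j ∈ Finset.range (igM n k b), (if igAN k b j = 1 then igUN k a b 1 j else 0)
      = (k:ℝ) * b - 1 := by
  rw [igSum n k b hk]
  have h1 : ∀ j ∈ Finset.range (k+1),
      (if igAN k b j = 1 then igUN k a b 1 j else 0) = (0:ℝ) := by
    intro j hj
    have hj' := Finset.mem_range.mp hj
    have hA : igAN k b j = 0 := by unfold igAN; rw [if_pos hj']
    rw [hA, if_neg (by omega)]
  have h2 : ∀ x ∈ Finset.range (k-1),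
      (if igAN k b ((k+1)+x) = 1 then igUN k a b 1 ((k+1)+x) else 0) = (b:ℝ) := by
    intro x hx
    have hx' := Finset.mem_range.mp hx
    have hA : igAN k b ((k+1)+x) = 1 := by
      unfold igAN; rw [if_neg (by omega), if_pos (by omega)]
    rw [hA, if_pos rfl, igUN1, if_pos (by omega)]
  have h3 : ∀ x ∈ Finset.range (b-1),
      (if igAN k b ((k+1)+((k-1)+x)) = 1 then igUN k a b 1 ((k+1)+((k-1)+x)) else 0) = (1:ℝ) := by
    intro x hx
    have hx' := Finset.mem_range.mp hx
    have hA : igAN k b ((k+1)+((k-1)+x)) = 1 := by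
      unfold igAN; rw [if_neg (by omega), if_pos (by omega)]
    rw [hA, if_pos rfl, igUN1, if_neg (by omega), if_pos (by omega)]
  have h4 : ∀ x ∈ Finset.range (n-2),
      (if igAN k b ((k+1)+((k-1)+((b-1)+x))) = 1
        then igUN k a b 1 ((k+1)+((k-1)+((b-1)+x))) else 0) = (0:ℝ) := by
    intro x hx
    have hA : igAN k b ((k+1)+((k-1)+((b-1)+x)))
        = ((k+1)+((k-1)+((b-1)+x))) - (2*k+(b-1)) + 2 := by
      unfold igAN; rw [if_neg (by omega), if_neg (by omega)]
    rw [hA, if_neg (by omega)]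
  rw [Finset.sum_congr rfl h1, Finset.sum_congr rfl h2, Finset.sum_congr rfl h3,
    Finset.sum_congr rfl h4]
  simp only [Finset.sum_const, Finset.sum_const_zero, Finset.card_range, nsmul_eq_mul,
    add_zero, zero_add, mul_one]
  rw [Nat.cast_sub hk, Nat.cast_sub hb]
  push_cast
  ring

lemma igSum_hi (n k a b : ℕ) (hk : 1 ≤ k) (i : ℕ) (hi2 : 2 ≤ i) (hin : i < n) :
    ∑ j ∈ Finset.range (igM n k b), (if igAN k b j = i then igUN k a b i j else 0)
      = 1 := by
  rw [igSum n k b hk]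
  have h1 : ∀ j ∈ Finset.range (k+1),
      (if igAN k b j = i then igUN k a b i j else 0) = (0:ℝ) := by
    intro j hj
    have hj' := Finset.mem_range.mp hj
    have hA : igAN k b j = 0 := by unfold igAN; rw [if_pos hj']
    rw [hA, if_neg (by omega)]
  have h2 : ∀ x ∈ Finset.range (k-1),
      (if igAN k b ((k+1)+x) = i then igUN k a b i ((k+1)+x) else 0) = (0:ℝ) := by
    intro x hx
    have hx' := Finset.mem_range.mp hx
    have hA : igAN k b ((k+1)+x) = 1 := by
      unfold igAN; rw [if_neg (by omega), if_pos (by omega)]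
    rw [hA, if_neg (by omega)]
  have h3 : ∀ x ∈ Finset.range (b-1),
      (if igAN k b ((k+1)+((k-1)+x)) = i then igUN k a b i ((k+1)+((k-1)+x)) else 0) = (0:ℝ) := by
    intro x hx
    have hx' := Finset.mem_range.mp hx
    have hA : igAN k b ((k+1)+((k-1)+x)) = 1 := by
      unfold igAN; rw [if_neg (by omega), if_pos (by omega)]
    rw [hA, if_neg (by omega)]
  have h4 : ∀ x ∈ Finset.range (n-2),
      (if igAN k b ((k+1)+((k-1)+((b-1)+x))) = i
        then igUN k a b i ((k+1)+((k-1)+((b-1)+x))) else 0)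
      = (if x = i - 2 then (1:ℝ) else 0) := by
    intro x hx
    have hx' := Finset.mem_range.mp hx
    have hA : igAN k b ((k+1)+((k-1)+((b-1)+x))) = x + 2 := by
      unfold igAN; rw [if_neg (by omega), if_neg (by omega)]; omega
    rw [hA]
    by_cases hxi : x + 2 = i
    · rw [if_pos hxi, if_pos (by omega : x = i - 2),
        igUN_hi k a b i _ hi2, if_pos ⟨by omega, by omega⟩]
    · rw [if_neg hxi, if_neg (by omega : ¬ x = i - 2)]
  rw [Finset.sum_congr rfl h1, Finset.sum_congr rfl h2, Finset.sum_congr rfl h3,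
    Finset.sum_congr rfl h4, Finset.sum_ite_eq' (Finset.range (n-2)) (i-2) (fun _ => (1:ℝ)),
    if_pos (Finset.mem_range.mpr (by omega))]
  simp

lemma igJunkTotal (n k a b : ℕ) (hk : 1 ≤ k) :
    ∑ g : Fin (igM n k b), (if 2*k ≤ (g:ℕ) ∧ (g:ℕ) < 2*k + (b-1) then (1:ℝ) else 0)
      = ((b-1:ℕ):ℝ) := by
  rw [Fin.sum_univ_eq_sum_range (fun j => if 2*k ≤ j ∧ j < 2*k+(b-1) then (1:ℝ) else 0)
    (igM n k b), igSum n k b hk]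
  have h1 : ∀ j ∈ Finset.range (k+1),
      (if 2*k ≤ j ∧ j < 2*k+(b-1) then (1:ℝ) else 0) = (0:ℝ) := by
    intro j hj
    have hj' := Finset.mem_range.mp hj
    rw [if_neg (fun hc => by have := hc.1; omega)]
  have h2 : ∀ x ∈ Finset.range (k-1),
      (if 2*k ≤ (k+1)+x ∧ (k+1)+x < 2*k+(b-1) then (1:ℝ) else 0) = (0:ℝ) := by
    intro x hx
    have hx' := Finset.mem_range.mp hx
    rw [if_neg (fun hc => by have := hc.1; omega)]
  have h3 : ∀ x ∈ Finset.range (b-1),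
      (if 2*k ≤ (k+1)+((k-1)+x) ∧ (k+1)+((k-1)+x) < 2*k+(b-1) then (1:ℝ) else 0) = (1:ℝ) := by
    intro x hx
    have hx' := Finset.mem_range.mp hx
    rw [if_pos ⟨by omega, by omega⟩]
  have h4 : ∀ x ∈ Finset.range (n-2),
      (if 2*k ≤ (k+1)+((k-1)+((b-1)+x)) ∧ (k+1)+((k-1)+((b-1)+x)) < 2*k+(b-1)
        then (1:ℝ) else 0) = (0:ℝ) := by
    intro x hx
    rw [if_neg (fun hc => by have := hc.2; omega)]
  rw [Finset.sum_congr rfl h1, Finset.sum_congr rfl h2, Finset.sum_congr rfl h3,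
    Finset.sum_congr rfl h4]
  simp

lemma igBigCard (n k b : ℕ) (hk : 1 ≤ k) :
    (Finset.univ.filter (fun g : Fin (igM n k b) => (g:ℕ) < 2*k)).card = 2*k := by
  rw [Finset.card_filter]
  rw [Fin.sum_univ_eq_sum_range (fun j => if j < 2*k then 1 else 0) (igM n k b),
    igSum n k b hk]
  have h1 : ∀ j ∈ Finset.range (k+1), (if j < 2*k then 1 else 0) = 1 := by
    intro j hj
    have hj' := Finset.mem_range.mp hj
    rw [if_pos (by omega)]
  have h2 : ∀ x ∈ Finset.range (k-1), (if (k+1)+x < 2*k then 1 else 0) = 1 := by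
    intro x hx
    have hx' := Finset.mem_range.mp hx
    rw [if_pos (by omega)]
  have h3 : ∀ x ∈ Finset.range (b-1), (if (k+1)+((k-1)+x) < 2*k then 1 else 0) = 0 := by
    intro x hx
    rw [if_neg (by omega)]
  have h4 : ∀ x ∈ Finset.range (n-2),
      (if (k+1)+((k-1)+((b-1)+x)) < 2*k then 1 else 0) = 0 := by
    intro x hx
    rw [if_neg (by omega)]
  rw [Finset.sum_congr rfl h1, Finset.sum_congr rfl h2, Finset.sum_congr rfl h3,
    Finset.sum_congr rfl h4]
  simp only [Finset.sum_const, Finset.sum_const_zero, Finset.card_range, smul_eq_mul,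
    mul_one, add_zero]
  omega

lemma igUnivHi (n k a b : ℕ) (hk : 1 ≤ k) (i : ℕ) (hi2 : 2 ≤ i) (hin : i < n) :
    ∑ j ∈ Finset.range (igM n k b), igUN k a b i j = 1 := by
  rw [igSum n k b hk]
  have h1 : ∀ j ∈ Finset.range (k+1), igUN k a b i j = (0:ℝ) := by
    intro j hj
    have hj' := Finset.mem_range.mp hj
    rw [igUN_hi k a b i j hi2, if_neg (fun hc => by have := hc.1; omega)]
  have h2 : ∀ x ∈ Finset.range (k-1), igUN k a b i ((k+1)+x) = (0:ℝ) := by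
    intro x hx
    have hx' := Finset.mem_range.mp hx
    rw [igUN_hi k a b i _ hi2, if_neg (fun hc => by have := hc.1; omega)]
  have h3 : ∀ x ∈ Finset.range (b-1), igUN k a b i ((k+1)+((k-1)+x)) = (0:ℝ) := by
    intro x hx
    have hx' := Finset.mem_range.mp hx
    rw [igUN_hi k a b i _ hi2, if_neg (fun hc => by have := hc.1; omega)]
  have h4 : ∀ x ∈ Finset.range (n-2),
      igUN k a b i ((k+1)+((k-1)+((b-1)+x))) = (if x = i - 2 then (1:ℝ) else 0) := by
    intro x hx
    have hx' := Finset.mem_range.mp hx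
    rw [igUN_hi k a b i _ hi2]
    by_cases hxi : i = ((k+1)+((k-1)+((b-1)+x))) - (2*k+(b-1)) + 2
    · rw [if_pos ⟨by omega, hxi⟩, if_pos (by omega)]
    · rw [if_neg (fun hc => hxi hc.2), if_neg (by omega)]
  rw [Finset.sum_congr rfl h1, Finset.sum_congr rfl h2, Finset.sum_congr rfl h3,
    Finset.sum_congr rfl h4, Finset.sum_ite_eq' (Finset.range (n-2)) (i-2) (fun _ => (1:ℝ)),
    if_pos (Finset.mem_range.mpr (by omega))]
  simp

lemma igEval00 (n k a b : ℕ) (hn : 2 ≤ n) (hk : 1 ≤ k) (i c : Fin n)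
    (hi : i.1 = 0) (hc : c.1 = 0) :
    util (igU n k a b) i (bundle (igA n k b hn) c) = ((k:ℝ)+1) * a := by
  rw [igUtilA n k a b hn i c, hi, hc, igSum00 n k a b hk]

lemma igEval10 (n k a b : ℕ) (hn : 2 ≤ n) (hk : 1 ≤ k) (i c : Fin n)
    (hi : i.1 = 1) (hc : c.1 = 0) :
    util (igU n k a b) i (bundle (igA n k b hn) c) = ((k:ℝ)+1) * b := by
  rw [igUtilA n k a b hn i c, hi, hc, igSum10 n k a b hk]

lemma igEval11 (n k a b : ℕ) (hn : 2 ≤ n) (hk : 1 ≤ k) (hb : 1 ≤ b) (i c : Fin n)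
    (hi : i.1 = 1) (hc : c.1 = 1) :
    util (igU n k a b) i (bundle (igA n k b hn) c) = (k:ℝ) * b - 1 := by
  rw [igUtilA n k a b hn i c, hi, hc, igSum11 n k a b hk hb]

lemma igEvalHi (n k a b : ℕ) (hn : 2 ≤ n) (hk : 1 ≤ k) (i : Fin n) (hi : 2 ≤ i.1) :
    util (igU n k a b) i (bundle (igA n k b hn) i) = 1 := by
  rw [igUtilA n k a b hn i i, igSum_hi n k a b hk i.1 hi i.2]

lemma igU0S (n k a b : ℕ) (i : Fin n) (hi : i.1 = 0) (S : Finset (Fin (igM n k b))) :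
    util (igU n k a b) i S = ((S.filter (fun g : Fin (igM n k b) => (g:ℕ) < 2*k)).card : ℝ) * a := by
  unfold util igU
  rw [hi]
  calc ∑ g ∈ S, igUN k a b 0 g.1
      = ∑ g ∈ S, (if (g:ℕ) < 2*k then (a:ℝ) else 0) :=
        Finset.sum_congr rfl (fun g _ => igUN0 k a b g.1)
    _ = ∑ _g ∈ S.filter (fun g : Fin (igM n k b) => (g:ℕ) < 2*k), (a:ℝ) :=
        (Finset.sum_filter (fun g : Fin (igM n k b) => (g:ℕ) < 2*k) (fun _ => (a:ℝ))).symm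
    _ = _ := by rw [Finset.sum_const, nsmul_eq_mul]

lemma igU1S_low (n k a b : ℕ) (i : Fin n) (hi : i.1 = 1) (S : Finset (Fin (igM n k b))) :
    ((S.filter (fun g : Fin (igM n k b) => (g:ℕ) < 2*k)).card : ℝ) * b ≤ util (igU n k a b) i S := by
  unfold util igU
  rw [hi]
  calc ((S.filter (fun g : Fin (igM n k b) => (g:ℕ) < 2*k)).card : ℝ) * b
      = ∑ _g ∈ S.filter (fun g : Fin (igM n k b) => (g:ℕ) < 2*k), (b:ℝ) := by
        rw [Finset.sum_const, nsmul_eq_mul]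
    _ = ∑ g ∈ S, (if (g:ℕ) < 2*k then (b:ℝ) else 0) :=
        Finset.sum_filter (fun g : Fin (igM n k b) => (g:ℕ) < 2*k) (fun _ => (b:ℝ))
    _ ≤ ∑ g ∈ S, igUN k a b 1 g.1 := by
        refine Finset.sum_le_sum (fun g _ => ?_)
        rw [igUN1 k a b g.1]
        split_ifs <;> norm_num

lemma igU1S_high (n k a b : ℕ) (hk : 1 ≤ k) (i : Fin n) (hi : i.1 = 1)
    (S : Finset (Fin (igM n k b))) :
    util (igU n k a b) i S
      ≤ ((S.filter (fun g : Fin (igM n k b) => (g:ℕ) < 2*k)).card : ℝ) * b + ((b-1:ℕ):ℝ) := by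
  unfold util igU
  rw [hi]
  rw [← Finset.sum_filter_add_sum_filter_not S (fun g : Fin (igM n k b) => (g:ℕ) < 2*k)
    (fun g => igUN k a b 1 g.1)]
  apply add_le_add
  · have hpt : ∀ g ∈ S.filter (fun g : Fin (igM n k b) => (g:ℕ) < 2*k), igUN k a b 1 (g:ℕ) = (b:ℝ) := by
      intro g hg
      have := (Finset.mem_filter.mp hg).2
      rw [igUN1 k a b (g:ℕ), if_pos this]
    rw [Finset.sum_congr rfl hpt, Finset.sum_const, nsmul_eq_mul]
  · have hpt : ∀ g ∈ S.filter (fun g : Fin (igM n k b) => ¬ (g:ℕ) < 2*k),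
        igUN k a b 1 (g:ℕ) = (if 2*k ≤ (g:ℕ) ∧ (g:ℕ) < 2*k+(b-1) then (1:ℝ) else 0) := by
      intro g hg
      have hnb := (Finset.mem_filter.mp hg).2
      rw [igUN1 k a b (g:ℕ), if_neg hnb]
      by_cases h2 : (g:ℕ) < 2*k+(b-1)
      · rw [if_pos h2, if_pos ⟨by omega, h2⟩]
      · rw [if_neg h2, if_neg (fun hc => h2 hc.2)]
    rw [Finset.sum_congr rfl hpt]
    calc ∑ g ∈ S.filter (fun g : Fin (igM n k b) => ¬ (g:ℕ) < 2*k),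
          (if 2*k ≤ (g:ℕ) ∧ (g:ℕ) < 2*k+(b-1) then (1:ℝ) else 0)
        ≤ ∑ g : Fin (igM n k b), (if 2*k ≤ (g:ℕ) ∧ (g:ℕ) < 2*k+(b-1) then (1:ℝ) else 0) := by
          refine Finset.sum_le_sum_of_subset_of_nonneg (Finset.subset_univ _) ?_
          intro g _ _
          split_ifs <;> norm_num
      _ = ((b-1:ℕ):ℝ) := igJunkTotal n k a b hk

lemma igUhiS (n k a b : ℕ) (hk : 1 ≤ k) (i : Fin n) (hi : 2 ≤ i.1)
    (S : Finset (Fin (igM n k b))) :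
    util (igU n k a b) i S ≤ 1 := by
  unfold util igU
  calc ∑ g ∈ S, igUN k a b i.1 g.1
      ≤ ∑ g : Fin (igM n k b), igUN k a b i.1 g.1 :=
        Finset.sum_le_sum_of_subset_of_nonneg (Finset.subset_univ _)
          (fun g _ _ => igUN_nonneg k a b i.1 g.1)
    _ = ∑ j ∈ Finset.range (igM n k b), igUN k a b i.1 j :=
        Fin.sum_univ_eq_sum_range (fun j => igUN k a b i.1 j) (igM n k b)
    _ = 1 := igUnivHi n k a b hk i.1 hi i.2

lemma igCoeSum {ι : Type*} (s : Finset ι) (r : ℝ) :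
    (∑ _i ∈ s, ((r : ℝ) : EReal)) = (((s.card : ℝ) * r : ℝ) : EReal) := by
  induction s using Finset.cons_induction with
  | empty => simp
  | cons a s ha ih =>
      rw [Finset.sum_cons, ih, Finset.card_cons, ← EReal.coe_add]
      congr 1
      push_cast
      ring

lemma igEF1_bound (n k a b : ℕ) (hk : 1 ≤ k) (ha : 1 ≤ a) (hb : 1 ≤ b)
    (i0 i1 : Fin n) (hi0 : i0.1 = 0) (hi1 : i1.1 = 1)
    (B : Fin (igM n k b) → Fin n) (hEF : EF1 (igU n k a b) B) :
    util (igU n k a b) i0 (bundle B i0) ≤ (k:ℝ) * a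
    ∧ util (igU n k a b) i1 (bundle B i1) ≤ ((k:ℝ)+1) * b - 1 := by
  have hi01 : i1 ≠ i0 := fun h => by rw [h] at hi1; omega
  have haR : (1:ℝ) ≤ (a:ℝ) := by exact_mod_cast ha
  have hbR : (1:ℝ) ≤ (b:ℝ) := by exact_mod_cast hb
  have hkR : (1:ℝ) ≤ (k:ℝ) := by exact_mod_cast hk
  have hcards : ((bundle B i0).filter (fun g : Fin (igM n k b) => (g:ℕ) < 2*k)).card
      + ((bundle B i1).filter (fun g : Fin (igM n k b) => (g:ℕ) < 2*k)).card ≤ 2*k := by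
    have hdisj : Disjoint ((bundle B i0).filter (fun g : Fin (igM n k b) => (g:ℕ) < 2*k))
        ((bundle B i1).filter (fun g : Fin (igM n k b) => (g:ℕ) < 2*k)) := by
      refine Finset.disjoint_filter_filter ?_
      rw [Finset.disjoint_left]
      intro g hg hg'
      have h1 := mem_bundle'.mp hg
      have h2 := mem_bundle'.mp hg'
      refine hi01 ?_
      rw [← h2, h1]
    calc ((bundle B i0).filter (fun g : Fin (igM n k b) => (g:ℕ) < 2*k)).card
          + ((bundle B i1).filter (fun g : Fin (igM n k b) => (g:ℕ) < 2*k)).card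
        = (((bundle B i0).filter (fun g : Fin (igM n k b) => (g:ℕ) < 2*k))
            ∪ ((bundle B i1).filter (fun g : Fin (igM n k b) => (g:ℕ) < 2*k))).card :=
          (Finset.card_union_of_disjoint hdisj).symm
      _ ≤ (Finset.univ.filter (fun g : Fin (igM n k b) => (g:ℕ) < 2*k)).card := by
          apply Finset.card_le_card
          intro g hg
          rcases Finset.mem_union.mp hg with h | h
          · exact Finset.mem_filter.mpr ⟨Finset.mem_univ g, (Finset.mem_filter.mp h).2⟩
          · exact Finset.mem_filter.mpr ⟨Finset.mem_univ g, (Finset.mem_filter.mp h).2⟩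
      _ = 2*k := igBigCard n k b hk
  have hbm1 : ((b-1:ℕ):ℝ) = (b:ℝ) - 1 := by rw [Nat.cast_sub hb, Nat.cast_one]
  have hs0k : ((bundle B i0).filter (fun g : Fin (igM n k b) => (g:ℕ) < 2*k)).card ≤ k := by
    by_contra hcon
    push_neg at hcon
    have hXne : ((bundle B i0).filter (fun g : Fin (igM n k b) => (g:ℕ) < 2*k)).Nonempty :=
      Finset.card_pos.mp (by omega)
    obtain ⟨g0, hg0⟩ := hXne
    have hne : bundle B i0 ≠ ∅ := Finset.ne_empty_of_mem (Finset.mem_filter.mp hg0).1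
    obtain ⟨g, hg, hle⟩ := hEF i1 i0 hne
    rw [util_erase' (igU n k a b) i1 hg] at hle
    have hlow : ((((bundle B i0).filter (fun g : Fin (igM n k b) => (g:ℕ) < 2*k)).card : ℝ)) * b
        ≤ util (igU n k a b) i1 (bundle B i0) := igU1S_low n k a b i1 hi1 _
    have hugb : igU n k a b i1 g ≤ (b:ℝ) := by
      show igUN k a b i1.1 g.1 ≤ (b:ℝ)
      rw [hi1, igUN1]
      split_ifs <;> linarith
    have hhig : util (igU n k a b) i1 (bundle B i1)
        ≤ ((((bundle B i1).filter (fun g : Fin (igM n k b) => (g:ℕ) < 2*k)).card : ℝ)) * b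
          + ((b-1:ℕ):ℝ) := igU1S_high n k a b hk i1 hi1 _
    rw [hbm1] at hhig
    have hc0 : ((k:ℝ)+1)
        ≤ ((((bundle B i0).filter (fun g : Fin (igM n k b) => (g:ℕ) < 2*k)).card : ℝ)) := by
      exact_mod_cast hcon
    have hcc : ((((bundle B i0).filter (fun g : Fin (igM n k b) => (g:ℕ) < 2*k)).card : ℝ))
        + ((((bundle B i1).filter (fun g : Fin (igM n k b) => (g:ℕ) < 2*k)).card : ℝ))
        ≤ 2*(k:ℝ) := by exact_mod_cast hcards
    have hc1 : ((((bundle B i1).filter (fun g : Fin (igM n k b) => (g:ℕ) < 2*k)).card : ℝ))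
        ≤ (k:ℝ) - 1 := by linarith
    have e1 : ((k:ℝ)+1) * b
        ≤ ((((bundle B i0).filter (fun g : Fin (igM n k b) => (g:ℕ) < 2*k)).card : ℝ)) * b :=
      mul_le_mul_of_nonneg_right hc0 (by linarith)
    have e2 : ((((bundle B i1).filter (fun g : Fin (igM n k b) => (g:ℕ) < 2*k)).card : ℝ)) * b
        ≤ ((k:ℝ)-1) * b := mul_le_mul_of_nonneg_right hc1 (by linarith)
    have e3 : ((k:ℝ)+1) * b = (k:ℝ)*b + b := by ring
    have e4 : ((k:ℝ)-1) * b = (k:ℝ)*b - b := by ring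
    linarith
  have hs1k : ((bundle B i1).filter (fun g : Fin (igM n k b) => (g:ℕ) < 2*k)).card ≤ k := by
    by_contra hcon
    push_neg at hcon
    have hXne : ((bundle B i1).filter (fun g : Fin (igM n k b) => (g:ℕ) < 2*k)).Nonempty :=
      Finset.card_pos.mp (by omega)
    obtain ⟨g1, hg1⟩ := hXne
    have hne : bundle B i1 ≠ ∅ := Finset.ne_empty_of_mem (Finset.mem_filter.mp hg1).1
    obtain ⟨g, hg, hle⟩ := hEF i0 i1 hne
    rw [util_erase' (igU n k a b) i0 hg] at hle
    rw [igU0S n k a b i0 hi0 (bundle B i1), igU0S n k a b i0 hi0 (bundle B i0)] at hle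
    have huga : igU n k a b i0 g ≤ (a:ℝ) := by
      show igUN k a b i0.1 g.1 ≤ (a:ℝ)
      rw [hi0, igUN0]
      split_ifs <;> linarith
    have hc1 : ((k:ℝ)+1)
        ≤ ((((bundle B i1).filter (fun g : Fin (igM n k b) => (g:ℕ) < 2*k)).card : ℝ)) := by
      exact_mod_cast hcon
    have hcc : ((((bundle B i0).filter (fun g : Fin (igM n k b) => (g:ℕ) < 2*k)).card : ℝ))
        + ((((bundle B i1).filter (fun g : Fin (igM n k b) => (g:ℕ) < 2*k)).card : ℝ))
        ≤ 2*(k:ℝ) := by exact_mod_cast hcards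
    have hc0 : ((((bundle B i0).filter (fun g : Fin (igM n k b) => (g:ℕ) < 2*k)).card : ℝ))
        ≤ (k:ℝ) - 1 := by linarith
    have e1 : ((k:ℝ)+1) * a
        ≤ ((((bundle B i1).filter (fun g : Fin (igM n k b) => (g:ℕ) < 2*k)).card : ℝ)) * a :=
      mul_le_mul_of_nonneg_right hc1 (by linarith)
    have e2 : ((((bundle B i0).filter (fun g : Fin (igM n k b) => (g:ℕ) < 2*k)).card : ℝ)) * a
        ≤ ((k:ℝ)-1) * a := mul_le_mul_of_nonneg_right hc0 (by linarith)
    have e3 : ((k:ℝ)+1) * a = (k:ℝ)*a + a := by ring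
    have e4 : ((k:ℝ)-1) * a = (k:ℝ)*a - a := by ring
    linarith
  constructor
  · rw [igU0S n k a b i0 hi0 (bundle B i0)]
    have hcle : ((((bundle B i0).filter (fun g : Fin (igM n k b) => (g:ℕ) < 2*k)).card : ℝ))
        ≤ (k:ℝ) := by exact_mod_cast hs0k
    exact mul_le_mul_of_nonneg_right hcle (by linarith)
  · refine le_trans (igU1S_high n k a b hk i1 hi1 _) ?_
    rw [hbm1]
    have hcle : ((((bundle B i1).filter (fun g : Fin (igM n k b) => (g:ℕ) < 2*k)).card : ℝ))
        ≤ (k:ℝ) := by exact_mod_cast hs1k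
    have e1 : ((((bundle B i1).filter (fun g : Fin (igM n k b) => (g:ℕ) < 2*k)).card : ℝ)) * b
        ≤ (k:ℝ) * b := mul_le_mul_of_nonneg_right hcle (by linarith)
    have e3 : ((k:ℝ)+1) * b = (k:ℝ)*b + b := by ring
    linarith

theorem integer_general_necessary (n : ℕ) (hn : 2 ≤ n) (f : ℝ → EReal)
    (hfmono : StrictMonoOn f (Set.Ici (0 : ℝ)))
    (hftop : ∀ x : ℝ, 0 ≤ x → f x ≠ ⊤)
    (hEF1 : (∀ m : ℕ, ∀ u : Fin n → Fin m → ℝ, (∀ i g, 0 ≤ u i g) →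
        IntegerValued u → PositiveAdmitting u →
        ∀ A : Fin m → Fin n, Chosen f u A → EF1 u A)) :
    Cond6a f := by
  intro k a b hk ha hb
  have hk1 : 1 ≤ k := hk
  have ha1 : 1 ≤ a := ha
  have hb1 : 1 ≤ b := hb
  have hkR : (1:ℝ) ≤ (k:ℝ) := by exact_mod_cast hk
  have haR : (1:ℝ) ≤ (a:ℝ) := by exact_mod_cast ha
  have hbR : (1:ℝ) ≤ (b:ℝ) := by exact_mod_cast hb
  have hq0 : (0:ℝ) ≤ (k:ℝ) * b - 1 := by nlinarith
  have hs0 : (0:ℝ) ≤ ((k:ℝ)+1) * b - 1 := by nlinarith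
  have hr0 : (0:ℝ) ≤ (k:ℝ) * a := by positivity
  have hp0 : (0:ℝ) ≤ ((k:ℝ)+1) * a := by positivity
  have hmono := hfmono.monotoneOn
  have hnotbot : ∀ x : ℝ, 0 < x → f x ≠ ⊥ := by
    intro x hx hbot
    have h0 : f 0 < f x := hfmono (Set.mem_Ici.mpr le_rfl) (Set.mem_Ici.mpr hx.le) hx
    rw [hbot] at h0
    exact not_lt_bot h0
  have hPt : f (((k:ℝ)+1) * a) ≠ ⊤ := hftop _ hp0
  have hRt : f ((k:ℝ) * a) ≠ ⊤ := hftop _ hr0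
  have hSt : f (((k:ℝ)+1) * b - 1) ≠ ⊤ := hftop _ hs0
  have hQt : f ((k:ℝ) * b - 1) ≠ ⊤ := hftop _ hq0
  have hPb : f (((k:ℝ)+1) * a) ≠ ⊥ := hnotbot _ (by nlinarith)
  have hRb : f ((k:ℝ) * a) ≠ ⊥ := hnotbot _ (by nlinarith)
  have hSb : f (((k:ℝ)+1) * b - 1) ≠ ⊥ := hnotbot _ (by nlinarith)
  unfold Delta
  by_cases hQb : f ((k:ℝ) * b - 1) = ⊥
  · rw [hQb, sub_eq_add_neg (f (((k:ℝ)+1) * (b:ℝ) - 1)), EReal.neg_bot,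
      EReal.add_top_of_ne_bot hSb, sub_eq_add_neg]
    exact EReal.add_lt_top hPt (by simp [hRb])
  · -- the instance
    have hmm2 : 2 ≤ igM n k b := by unfold igM; omega
    have h0n : 0 < n := by omega
    have h1n : 1 < n := by omega
    have hu0 : ∀ (i : Fin n) (g : Fin (igM n k b)), 0 ≤ igU n k a b i g :=
      fun i g => igUN_nonneg k a b i.1 g.1
    have hint : IntegerValued (igU n k a b) := by
      intro i g
      unfold igU igUN
      split_ifs
      · exact ⟨a, rfl⟩
      · exact ⟨b, rfl⟩
      · exact ⟨0, by norm_num⟩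
      · exact ⟨1, by norm_num⟩
      · exact ⟨0, by norm_num⟩
      · exact ⟨1, by norm_num⟩
      · exact ⟨0, by norm_num⟩
    have hpos : PositiveAdmitting (igU n k a b) := by
      refine ⟨igP n k b hn, fun i => ?_⟩
      have key : ∀ g : Fin (igM n k b), igP n k b hn g = i → 0 < igU n k a b i g →
          0 < util (igU n k a b) i (bundle (igP n k b hn) i) := by
        intro g hg hpg
        have hmem : g ∈ bundle (igP n k b hn) i := mem_bundle'.mpr hg
        exact lt_of_lt_of_le hpg (Finset.single_le_sum (fun x _ => hu0 i x) hmem)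
      by_cases hi0 : i.1 = 0
      · refine key ⟨0, by omega⟩ (Fin.ext ?_) ?_
        · show igPN k b 0 = i.1
          rw [hi0]
          simp only [igPN]
          split_ifs <;> first | omega | exact False.elim (by assumption)
        · show (0:ℝ) < igUN k a b i.1 0
          rw [hi0, igUN0, if_pos (by omega)]
          linarith
      · by_cases hi1 : i.1 = 1
        · refine key ⟨1, by omega⟩ (Fin.ext ?_) ?_
          · show igPN k b 1 = i.1
            rw [hi1]
            simp only [igPN]
            split_ifs <;> first | omega | exact False.elim (by assumption)
          · show (0:ℝ) < igUN k a b i.1 1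
            rw [hi1, igUN1, if_pos (by omega)]
            linarith
        · have hi2 : 2 ≤ i.1 := by omega
          refine key ⟨2*k + (b-1) + (i.1 - 2), by have := i.2; unfold igM; omega⟩
            (Fin.ext ?_) ?_
          · show igPN k b (2*k + (b-1) + (i.1 - 2)) = i.1
            simp only [igPN]
            split_ifs <;> first | omega | exact False.elim (by assumption)
          · show (0:ℝ) < igUN k a b i.1 (2*k + (b-1) + (i.1 - 2))
            rw [igUN_hi k a b i.1 _ hi2, if_pos ⟨by omega, by omega⟩]
            norm_num
    set i0 : Fin n := ⟨0, h0n⟩ with hi0def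
    set i1 : Fin n := ⟨1, h1n⟩ with hi1def
    have hi01 : i1 ≠ i0 := by
      intro hcon
      have := congrArg Fin.val hcon
      simp [hi0def, hi1def] at this
    have hnEF : ¬ EF1 (igU n k a b) (igA n k b hn) := by
      intro hEF
      have hg0 : (⟨0, by omega⟩ : Fin (igM n k b)) ∈ bundle (igA n k b hn) i0 := by
        refine mem_bundle'.mpr (Fin.ext ?_)
        show igAN k b 0 = 0
        simp only [igAN]
        split_ifs <;> first | omega | exact False.elim (by assumption)
      obtain ⟨g, hg, hle⟩ := hEF i1 i0 (Finset.ne_empty_of_mem hg0)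
      have hgA : igAN k b g.1 = 0 := congrArg Fin.val (mem_bundle'.mp hg)
      have hgsm : g.1 < k + 1 := by
        by_contra hcon
        have hne0 : igAN k b g.1 ≠ 0 := by
          simp only [igAN]
          rw [if_neg hcon]
          split_ifs <;> first | omega | exact False.elim (by assumption)
        exact hne0 hgA
      have hub : igU n k a b i1 g = (b:ℝ) := by
        show igUN k a b i1.1 g.1 = (b:ℝ)
        rw [show i1.1 = 1 from rfl, igUN1, if_pos (by omega)]
      rw [util_erase' (igU n k a b) i1 hg, hub,
        igEval10 n k a b hn hk1 i1 i0 rfl rfl,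
        igEval11 n k a b hn hk1 hb1 i1 i1 rfl rfl] at hle
      linarith
    have hE2 : ∀ i ∈ (Finset.univ.erase i0).erase i1, 2 ≤ i.1 := by
      intro i hi
      have h1 := (Finset.mem_erase.mp hi).1
      have h0 := (Finset.mem_erase.mp (Finset.mem_erase.mp hi).2).1
      have hv1 : i.1 ≠ 1 := fun h => h1 (Fin.ext h)
      have hv0 : i.1 ≠ 0 := fun h => h0 (Fin.ext h)
      omega
    have hsplit : ∀ T : Fin n → EReal,
        ∑ i : Fin n, T i = T i0 + (T i1 + ∑ i ∈ (Finset.univ.erase i0).erase i1, T i) := by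
      intro T
      rw [← Finset.add_sum_erase Finset.univ T (Finset.mem_univ i0)]
      congr 1
      rw [← Finset.add_sum_erase _ T (Finset.mem_erase.mpr ⟨hi01, Finset.mem_univ i1⟩)]
    have hWA : welfare f (igU n k a b) (igA n k b hn)
        = f (((k:ℝ)+1) * a)
          + (f ((k:ℝ) * b - 1) + ∑ _i ∈ (Finset.univ.erase i0).erase i1, f 1) := by
      unfold welfare
      rw [hsplit (fun i => f (util (igU n k a b) i (bundle (igA n k b hn) i)))]
      rw [igEval00 n k a b hn hk1 i0 i0 rfl rfl, igEval11 n k a b hn hk1 hb1 i1 i1 rfl rfl]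
      congr 2
      refine Finset.sum_congr rfl fun i hi => ?_
      rw [igEvalHi n k a b hn hk1 i (hE2 i hi)]
    have hnonempty : Nonempty (Fin n) := ⟨i0⟩
    obtain ⟨Astar, hAstar⟩ := Finite.exists_max (welfare f (igU n k a b))
    have hEFstar : EF1 (igU n k a b) Astar := hEF1 _ _ hu0 hint hpos Astar hAstar
    have hltA : welfare f (igU n k a b) (igA n k b hn) < welfare f (igU n k a b) Astar := by
      have hnc : ¬ Chosen f (igU n k a b) (igA n k b hn) :=
        fun hch => hnEF (hEF1 _ _ hu0 hint hpos _ hch)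
      unfold Chosen at hnc
      push_neg at hnc
      obtain ⟨B, hB⟩ := hnc
      exact lt_of_lt_of_le hB (hAstar B)
    have hWstar : welfare f (igU n k a b) Astar
        ≤ f ((k:ℝ) * a)
          + (f (((k:ℝ)+1) * b - 1) + ∑ _i ∈ (Finset.univ.erase i0).erase i1, f 1) := by
      unfold welfare
      rw [hsplit (fun i => f (util (igU n k a b) i (bundle Astar i)))]
      obtain ⟨hbd0, hbd1⟩ := igEF1_bound n k a b hk1 ha1 hb1 i0 i1 rfl rfl Astar hEFstar
      refine add_le_add ?_ (add_le_add ?_ ?_)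
      · exact hmono (Set.mem_Ici.mpr (util_nonneg' hu0 i0 _)) (Set.mem_Ici.mpr hr0) hbd0
      · exact hmono (Set.mem_Ici.mpr (util_nonneg' hu0 i1 _)) (Set.mem_Ici.mpr hs0) hbd1
      · refine Finset.sum_le_sum fun i hi => ?_
        exact hmono (Set.mem_Ici.mpr (util_nonneg' hu0 i _))
          (Set.mem_Ici.mpr (by norm_num)) (igUhiS n k a b hk1 i (hE2 i hi) _)
    have hkey : f (((k:ℝ)+1) * a)
          + (f ((k:ℝ) * b - 1) + ∑ _i ∈ (Finset.univ.erase i0).erase i1, f 1)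
        < f ((k:ℝ) * a)
          + (f (((k:ℝ)+1) * b - 1) + ∑ _i ∈ (Finset.univ.erase i0).erase i1, f 1) := by
      rw [← hWA]
      exact lt_of_lt_of_le hltA hWstar
    obtain ⟨p, hp⟩ : ∃ p : ℝ, f (((k:ℝ)+1) * a) = (p : EReal) :=
      ⟨_, (EReal.coe_toReal hPt hPb).symm⟩
    obtain ⟨r, hr⟩ : ∃ r : ℝ, f ((k:ℝ) * a) = (r : EReal) :=
      ⟨_, (EReal.coe_toReal hRt hRb).symm⟩
    obtain ⟨s, hs⟩ : ∃ s : ℝ, f (((k:ℝ)+1) * b - 1) = (s : EReal) :=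
      ⟨_, (EReal.coe_toReal hSt hSb).symm⟩
    obtain ⟨q, hq⟩ : ∃ q : ℝ, f ((k:ℝ) * b - 1) = (q : EReal) :=
      ⟨_, (EReal.coe_toReal hQt hQb).symm⟩
    obtain ⟨w, hw⟩ : ∃ w : ℝ, f (1:ℝ) = (w : EReal) :=
      ⟨_, (EReal.coe_toReal (hftop 1 (by norm_num)) (hnotbot 1 (by norm_num))).symm⟩
    have hCsum : (∑ _i ∈ (Finset.univ.erase i0).erase i1, f (1:ℝ))
        = ((((((Finset.univ.erase i0).erase i1).card : ℝ) * w : ℝ)) : EReal) := by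
      rw [Finset.sum_congr rfl (fun i _ => hw)]
      exact igCoeSum _ w
    rw [hp, hq, hr, hs, hCsum, ← EReal.coe_add, ← EReal.coe_add, ← EReal.coe_add,
      ← EReal.coe_add] at hkey
    have hkeyR := EReal.coe_lt_coe_iff.mp hkey
    rw [hp, hq, hr, hs, ← EReal.coe_sub, ← EReal.coe_sub]
    exact EReal.coe_lt_coe_iff.mpr (by linarith)

end FairDiv
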